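/- Let G be a chordal graph with terminal set T ⊆ V(G), let k be a nonnegative integer, and let v be a simplicial vertex of G with v ∉ T whose closed neighbourhood is N[v] = {v, t, x, y} of size four, where t ∈ T and x, y ∉ T. If G has a subset feedback vertex set with respect to T of size at most k, then G has a subset feedback vertex set with respect to T of size at most k that does not contain v. -/

import Mathlib

open SimpleGraph

variable {V : Type*}

/-- A `T`-triangle, represented as its vertex set: three pairwise adjacent
vertices at least one of which is a terminal. -/
def IsTTriangle (G : SimpleGraph V) (T Δ : Set V) : Prop :=
  ∃ a b c : V, Δ = {a, b, c} ∧ G.Adj a b ∧ G.Adj a c ∧ G.Adj b c ∧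
    (a ∈ T ∨ b ∈ T ∨ c ∈ T)

/-- The induced subgraph `G − S` contains a `T`-triangle. -/
def HasTTriangleAvoiding (G : SimpleGraph V) (T S : Set V) : Prop :=
  ∃ Δ : Set V, IsTTriangle G T Δ ∧ Δ ∩ S = ∅

/-- The induced subgraph `G − S` contains a `T`-cycle: a cycle of `G` avoiding
`S` and passing through a vertex of `T`. -/
def HasTCycleAvoiding (G : SimpleGraph V) (T S : Set V) : Prop :=
  ∃ (v : V) (c : G.Walk v v), c.IsCycle ∧ (∀ x ∈ c.support, x ∉ S) ∧
    ∃ t ∈ T, t ∈ c.support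

/-- `S` is a subset feedback vertex set of `G` with respect to `T`:
`G − S` contains no `T`-cycle. -/
def IsSubsetFVS (G : SimpleGraph V) (T S : Set V) : Prop :=
  ¬ HasTCycleAvoiding G T S

/-- A cycle has a chord: an edge of `G` between two vertices of the cycle
which is not an edge of the cycle. -/
def WalkHasChord (G : SimpleGraph V) {v : V} (c : G.Walk v v) : Prop :=
  ∃ x y : V, x ∈ c.support ∧ y ∈ c.support ∧ G.Adj x y ∧ s(x, y) ∉ c.edges

/-- A graph is chordal if every cycle of length at least four has a chord. -/
def Chordal (G : SimpleGraph V) : Prop :=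
  ∀ (v : V) (c : G.Walk v v), c.IsCycle → 4 ≤ c.length → WalkHasChord G c

/-- A bridge: an edge lying on no cycle of the graph. -/
def IsBridgeEdge (G : SimpleGraph V) (e : Sym2 V) : Prop :=
  e ∈ G.edgeSet ∧ ∀ (v : V) (c : G.Walk v v), c.IsCycle → e ∉ c.edges

/-- `(K, I)` is a split partition of `G`: `K` is a clique, `I` an independent
set, and they partition the vertex set. -/
def IsSplitPartition (G : SimpleGraph V) (K I : Set V) : Prop :=
  K ∪ I = Set.univ ∧ K ∩ I = ∅ ∧ G.IsClique K ∧ I.Pairwise fun a b => ¬ G.Adj a b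

/-- The closed neighbourhood `N[v]` of a vertex. -/
def closedNbhd (G : SimpleGraph V) (v : V) : Set V := insert v (G.neighborSet v)

/-- A vertex is simplicial if its closed neighbourhood is a clique. -/
def IsSimplicial (G : SimpleGraph V) (v : V) : Prop := G.IsClique (closedNbhd G v)

/-- A maximal clique. -/
def IsMaxClique (G : SimpleGraph V) (C : Set V) : Prop :=
  G.IsClique C ∧ ∀ C' : Set V, G.IsClique C' → C ⊆ C' → C' = C

/-- A matching, as a set of edges of `G` no two of which share an endvertex. -/
def IsEdgeMatching (G : SimpleGraph V) (M : Set (Sym2 V)) : Prop :=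
  M ⊆ G.edgeSet ∧ ∀ e ∈ M, ∀ f ∈ M, e ≠ f → ∀ z : V, z ∈ e → z ∉ f

/-- A set of edges saturates a vertex if some edge of it is incident with it. -/
def Saturates (M : Set (Sym2 V)) (z : V) : Prop := ∃ e ∈ M, z ∈ e

/-- `M` is a `t`-expansion of `X` into `Y`: every edge of `M` goes between `X`
and `Y`, every vertex of `X` is incident with exactly `t` edges of `M`, and the
edges of `M` are incident with exactly `t * |X|` distinct vertices of `Y`. -/
def IsExpansion (G : SimpleGraph V) (t : ℕ) (X Y : Set V) (M : Set (Sym2 V)) : Prop :=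
  M ⊆ G.edgeSet ∧ (∀ e ∈ M, ∃ x ∈ X, ∃ y ∈ Y, e = s(x, y)) ∧
    (∀ x ∈ X, {e ∈ M | x ∈ e}.ncard = t) ∧
    {y ∈ Y | Saturates M y}.ncard = t * X.ncard



private lemma walk_mem_support_iff_mem_tail {G : SimpleGraph V} {u z : V} {c : G.Walk u u}
    (hc : ¬ c.Nil) : z ∈ c.support ↔ z ∈ c.support.tail := by
  cases c with
  | nil => simp at hc
  | cons h q =>
    simp only [Walk.support_cons, List.tail_cons, List.mem_cons]
    constructor
    · rintro (rfl | hz)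
      · exact q.end_mem_support
      · exact hz
    · exact Or.inr

private lemma mem_support_rotate_iff [DecidableEq V] {G : SimpleGraph V} {u v z : V} {c : G.Walk v v}
    (hc : c.IsCycle) (h : u ∈ c.support) :
    z ∈ (c.rotate u h).support ↔ z ∈ c.support := by
  rw [walk_mem_support_iff_mem_tail (hc.rotate h).not_nil,
    walk_mem_support_iff_mem_tail hc.not_nil]
  exact (Walk.support_rotate c u h).mem_iff

private lemma path_support_of_edge {G : SimpleGraph V} {a w : V} (p : G.Walk a w)
    (hp : p.IsPath) (he : s(a, w) ∈ p.edges) : p.support = [a, w] := by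
  cases p with
  | nil => simp at he
  | @cons _ b _ h q =>
    rw [Walk.edges_cons, List.mem_cons] at he
    rcases he with he | he
    · rcases Sym2.eq_iff.mp he with ⟨-, rfl⟩ | ⟨rfl, -⟩
      · have : q = Walk.nil := Walk.isPath_iff_eq_nil.mp hp.of_cons
        subst this; simp
      · exact absurd rfl h.ne
    · have : a ∈ q.support := q.fst_mem_support_of_mem_edges he
      exact absurd this ((Walk.cons_isPath_iff h q).mp hp).2

theorem stmt16 {V : Type} [Fintype V] (G : SimpleGraph V) (T : Set V)
    (hG : Chordal G) (k : ℕ) (v t x y : V) (hvT : v ∉ T)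
    (hsimp : IsSimplicial G v)
    (hC : closedNbhd G v = {v, t, x, y})
    (hcard : ({v, t, x, y} : Set V).ncard = 4)
    (htT : t ∈ T) (hxT : x ∉ T) (hyT : y ∉ T)
    (hex : ∃ S : Set V, IsSubsetFVS G T S ∧ S.ncard ≤ k) :
    ∃ S : Set V, IsSubsetFVS G T S ∧ S.ncard ≤ k ∧ v ∉ S := by
  classical
  obtain ⟨S, hS, hSk⟩ := hex
  by_cases hvS : v ∈ S
  swap
  · exact ⟨S, hS, hSk, hvS⟩
  have hvt : v ≠ t := by
    rintro rfl
    rw [Set.insert_idem] at hcard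
    have h3 : ({v, x, y} : Set V).ncard ≤ 3 := by
      calc ({v, x, y} : Set V).ncard ≤ ({x, y} : Set V).ncard + 1 := Set.ncard_insert_le _ _
        _ ≤ (({y} : Set V).ncard + 1) + 1 := by
            exact Nat.add_le_add_right (Set.ncard_insert_le _ _) 1
        _ = 3 := by rw [Set.ncard_singleton]
    omega
  set S' : Set V := insert t (S \ {v}) with hS'def
  have htS' : t ∈ S' := Set.mem_insert _ _
  have hvS' : v ∉ S' := by
    simp only [hS'def, Set.mem_insert_iff, Set.mem_diff, Set.mem_singleton_iff]
    tauto
  have hS'k : S'.ncard ≤ k := by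
    by_cases htS : t ∈ S
    · refine le_trans (Set.ncard_le_ncard ?_ S.toFinite) hSk
      rintro z (rfl | ⟨hzS, -⟩)
      · exact htS
      · exact hzS
    · rw [hS'def, Set.ncard_exchange htS hvS]; exact hSk
  refine ⟨S', ?_, hS'k, hvS'⟩
  rintro ⟨u0, c0, hcyc0, hav0, τ, hτT, hτs⟩
  by_cases hvc : v ∈ c0.support
  swap
  · refine hS ⟨u0, c0, hcyc0, fun z hz hzS => hav0 z hz ?_, τ, hτT, hτs⟩
    simp only [hS'def, Set.mem_insert_iff, Set.mem_diff, Set.mem_singleton_iff]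
    exact Or.inr ⟨hzS, fun h => hvc (h ▸ hz)⟩
  have hcyc : (c0.rotate v hvc).IsCycle := hcyc0.rotate hvc
  have hav : ∀ z ∈ (c0.rotate v hvc).support, z ∉ S' :=
    fun z hz => hav0 z ((mem_support_rotate_iff hcyc0 hvc).mp hz)
  have hτc : τ ∈ (c0.rotate v hvc).support := (mem_support_rotate_iff hcyc0 hvc).mpr hτs
  set c := c0.rotate v hvc with hcdef
  clear_value c
  clear hcdef hvc hav0 hτs hcyc0
  cases c with
  | nil => exact absurd rfl hcyc.ne_nil
  | @cons _ b _ h q =>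
    cases q with
    | nil =>
      have := hcyc.three_le_length
      simp at this
    | @cons _ b2 _ h1 q1 =>
      obtain ⟨w, p, hwv, hq⟩ := Walk.exists_cons_eq_concat h1 q1
      rw [hq] at hcyc hav hτc
      have hpair := (Walk.cons_isCycle_iff _ h).mp hcyc
      have hPpath : (p.concat hwv).IsPath := hpair.1
      have hsupnd := hPpath.support_nodup
      rw [Walk.support_concat, List.nodup_append] at hsupnd
      have hvp : v ∉ p.support := fun hv' => hsupnd.2.2 v hv' v (List.mem_singleton.mpr rfl) rfl
      have hpnd : p.support.Nodup := hsupnd.1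
      have hpp : p.IsPath := (Walk.isPath_def p).mpr hpnd
      have hlen : 1 ≤ p.length := by
        have := hcyc.three_le_length
        rw [Walk.length_cons, Walk.length_concat] at this
        omega
      have hbw : b ≠ w := by
        rintro rfl
        have hnil : p = Walk.nil := Walk.isPath_iff_eq_nil.mp hpp
        rw [hnil] at hlen
        simp at hlen
      have hin : ∀ z ∈ p.support, z ∈ (Walk.cons h (p.concat hwv)).support := by
        intro z hz
        rw [Walk.support_cons, Walk.support_concat]
        exact List.mem_cons_of_mem _ (List.mem_append_left _ hz)
      have hmemb := hin b p.start_mem_support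
      have hmemw := hin w p.end_mem_support
      have hbt : b ≠ t := fun hbt => hav b hmemb (hbt ▸ htS')
      have hwt : w ≠ t := fun hwt => hav w hmemw (hwt ▸ htS')
      have hxy : ∀ z, G.Adj v z → z ≠ t → z = x ∨ z = y := by
        intro z hz hzt
        have hmem : z ∈ closedNbhd G v := Set.mem_insert_of_mem _ hz
        rw [hC] at hmem
        simp only [Set.mem_insert_iff, Set.mem_singleton_iff] at hmem
        rcases hmem with rfl | rfl | rfl | rfl
        · exact absurd hz (G.irrefl)
        · exact absurd rfl hzt
        · exact Or.inl rfl
        · exact Or.inr rfl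
      have hbxy := hxy b h hbt
      have hwxy := hxy w hwv.symm hwt
      have haw : G.Adj b w :=
        hsimp (Set.mem_insert_of_mem _ h) (Set.mem_insert_of_mem _ hwv.symm) hbw
      have hτv : τ ≠ v := fun h' => hvT (h' ▸ hτT)
      have hτp : τ ∈ p.support := by
        rw [Walk.support_cons] at hτc
        rcases List.mem_cons.mp hτc with h' | h'
        · exact absurd h' hτv
        · rw [Walk.support_concat] at h'
          rcases List.mem_append.mp h' with h'' | h''
          · exact h''
          · exact absurd (List.mem_singleton.mp h'') hτv
      have hτxy : ¬(τ = x ∨ τ = y) := by rintro (rfl | rfl); exacts [hxT hτT, hyT hτT]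
      have hnedge : s(b, w) ∉ p.edges := by
        intro hedge
        have hsup2 := path_support_of_edge p hpp hedge
        rw [hsup2] at hτp
        simp only [List.mem_cons, List.mem_singleton, List.not_mem_nil, or_false] at hτp
        rcases hτp with rfl | rfl
        · exact hτxy hbxy
        · exact hτxy hwxy
      have hnewcyc : (Walk.cons haw p.reverse).IsCycle := by
        rw [Walk.cons_isCycle_iff]
        refine ⟨hpp.reverse, ?_⟩
        rw [Walk.edges_reverse, List.mem_reverse]
        exact hnedge
      refine hS ⟨b, Walk.cons haw p.reverse, hnewcyc, ?_, τ, hτT, ?_⟩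
      · intro z hz hzS
        have hzp : z ∈ p.support := by
          rw [Walk.support_cons, Walk.support_reverse] at hz
          rcases List.mem_cons.mp hz with rfl | hz'
          · exact p.start_mem_support
          · exact List.mem_reverse.mp hz'
        have hz1 : z ∉ S' := hav z (hin z hzp)
        have hz2 : z ≠ v := fun h' => hvp (h' ▸ hzp)
        apply hz1
        simp only [hS'def, Set.mem_insert_iff, Set.mem_diff, Set.mem_singleton_iff]
        exact Or.inr ⟨hzS, hz2⟩
      · rw [Walk.support_cons, Walk.support_reverse]
        exact List.mem_cons_of_mem _ (List.mem_reverse.mpr hτp)
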